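/- Let A be an n×n real matrix all of whose eigenvalues have negative real part (Hurwitz). Then there exists a symmetric positive definite matrix P such that P·A + Aᵀ·P = -I. -/

import Mathlib

open NormedSpace MeasureTheory Filter Matrix Set Topology

set_option maxHeartbeats 1000000

section Lyap
attribute [local instance] Matrix.linftyOpNormedAddCommGroup Matrix.linftyOpNormedSpace
  Matrix.linftyOpNormedRing Matrix.linftyOpNormedAlgebra

variable {n : ℕ}

noncomputable instance lyapENorm : ENormedAddCommMonoid (Matrix (Fin n) (Fin n) ℝ) :=
  NormedAddCommGroup.toENormedAddCommMonoid

instance lyapPseudoMetrizable : TopologicalSpace.PseudoMetrizableSpace (Matrix (Fin n) (Fin n) ℝ) :=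
  inferInstanceAs (TopologicalSpace.PseudoMetrizableSpace (Fin n → Fin n → ℝ))

/-- mulVec at a fixed vector, as a CLM in the matrix argument. -/
noncomputable def mulVecAtCLM (v : Fin n → ℂ) :
    Matrix (Fin n) (Fin n) ℂ →L[ℂ] (Fin n → ℂ) :=
  LinearMap.toContinuousLinearMap
    { toFun := fun B => B *ᵥ v
      map_add' := fun B C => Matrix.add_mulVec B C v
      map_smul' := fun a B => Matrix.smul_mulVec a B v }

@[simp] lemma mulVecAtCLM_apply (v : Fin n → ℂ) (B : Matrix (Fin n) (Fin n) ℂ) :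
    mulVecAtCLM v B = B *ᵥ v := rfl

lemma exp_mulVec_genEig (M : Matrix (Fin n) (Fin n) ℂ) {μ : ℂ} {v : Fin n → ℂ}
    (hv : v ∈ Module.End.maxGenEigenspace (Matrix.toLinAlgEquiv' M) μ) :
    ∃ K : ℕ, ∀ t : ℝ, 0 ≤ t →
      ‖exp (t • M) *ᵥ v‖ ≤ Real.exp (t * μ.re) *
        ∑ k ∈ Finset.range K, t ^ k * ‖((M - μ • 1) ^ k) *ᵥ v‖ / (k.factorial : ℝ) := by
  obtain ⟨K, hK⟩ := (Module.End.mem_maxGenEigenspace _ _ _).mp hv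
  set N : Matrix (Fin n) (Fin n) ℂ := M - μ • 1 with hN
  have hNv : ∀ k, K ≤ k → (N ^ k) *ᵥ v = 0 := by
    intro k hk
    have h1 : (N ^ K) *ᵥ v = 0 := by
      have : Matrix.toLinAlgEquiv' (N ^ K) =
          (Matrix.toLinAlgEquiv' M - μ • 1) ^ K := by
        rw [map_pow, map_sub, _root_.map_smul, _root_.map_one]
      calc (N ^ K) *ᵥ v = (Matrix.toLinAlgEquiv' (N ^ K)) v := rfl
        _ = ((Matrix.toLinAlgEquiv' M - μ • 1) ^ K) v := by rw [this]
        _ = 0 := hK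
    calc (N ^ k) *ᵥ v = (N ^ (k - K) * N ^ K) *ᵥ v := by rw [← pow_add, Nat.sub_add_cancel hk]
      _ = (N ^ (k - K)) *ᵥ ((N ^ K) *ᵥ v) := by rw [Matrix.mulVec_mulVec]
      _ = 0 := by rw [h1, Matrix.mulVec_zero]
  refine ⟨K, fun t ht => ?_⟩
  have hsplit : t • M = (t : ℂ) • N + ((t : ℂ) * μ) • (1 : Matrix (Fin n) (Fin n) ℂ) := by
    have : t • M = (t : ℂ) • M := by
      rw [← algebraMap_smul ℂ t M, Complex.coe_algebraMap]
    rw [this, hN, smul_sub, smul_smul, sub_add_cancel]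
  have hcomm : Commute ((t : ℂ) • N) (((t : ℂ) * μ) • (1 : Matrix (Fin n) (Fin n) ℂ)) := by
    exact (Commute.one_right ((t:ℂ) • N)).smul_right _
  have hexpand : exp (t • M) *ᵥ v =
      Complex.exp ((t:ℂ) * μ) • ((exp ((t:ℂ) • N)) *ᵥ v) := by
    rw [hsplit, Matrix.exp_add_of_commute _ _ hcomm]
    rw [show (((t:ℂ) * μ) • (1 : Matrix (Fin n) (Fin n) ℂ)) = algebraMap ℂ _ ((t:ℂ)*μ) from
      (Algebra.algebraMap_eq_smul_one _).symm]
    erw [← algebraMap_exp_comm (𝕂 := ℂ)]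
    rw [Algebra.algebraMap_eq_smul_one, mul_smul_comm, mul_one,
      Matrix.smul_mulVec]
    congr 2
    rw [Complex.exp_eq_exp_ℂ]
  have hseries : exp ((t:ℂ) • N) *ᵥ v =
      ∑ k ∈ Finset.range K, (((k.factorial : ℂ))⁻¹ * (t:ℂ)^k) • ((N ^ k) *ᵥ v) := by
    have hsum := expSeries_summable' (𝕂 := ℂ) ((t:ℂ) • N)
    have hterm : ∀ k : ℕ, mulVecAtCLM v ((((k.factorial : ℂ)))⁻¹ • ((t:ℂ) • N)^k)
        = (((k.factorial : ℂ))⁻¹ * (t:ℂ)^k) • ((N ^ k) *ᵥ v) := by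
      intro k
      simp only [_root_.map_smul, mulVecAtCLM_apply, smul_pow, Matrix.smul_mulVec, smul_smul]
    calc exp ((t:ℂ) • N) *ᵥ v
        = mulVecAtCLM v (∑' k : ℕ, (((k.factorial : ℂ)))⁻¹ • ((t:ℂ) • N)^k) := by
          rw [exp_eq_tsum ℂ]
          rfl
      _ = ∑' k : ℕ, mulVecAtCLM v ((((k.factorial : ℂ)))⁻¹ • ((t:ℂ) • N)^k) :=
          (mulVecAtCLM v).map_tsum hsum
      _ = ∑' k : ℕ, (((k.factorial : ℂ))⁻¹ * (t:ℂ)^k) • ((N ^ k) *ᵥ v) := by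
          simp_rw [hterm]
      _ = ∑ k ∈ Finset.range K, (((k.factorial : ℂ))⁻¹ * (t:ℂ)^k) • ((N ^ k) *ᵥ v) := by
          refine tsum_eq_sum fun k hk => ?_
          rw [hNv k (by simpa using hk), smul_zero]
  rw [hexpand, norm_smul, Complex.norm_exp]
  have hre : ((t:ℂ) * μ).re = t * μ.re := by simp
  rw [hre, hseries]
  refine mul_le_mul_of_nonneg_left ?_ (Real.exp_nonneg _)
  refine (norm_sum_le _ _).trans (le_of_eq (Finset.sum_congr rfl fun k _ => ?_))
  rw [norm_smul]
  have h1 : ‖((k.factorial : ℂ))⁻¹ * (t:ℂ)^k‖ = (k.factorial : ℝ)⁻¹ * t^k := by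
    rw [norm_mul, norm_inv, norm_pow]
    simp [Complex.norm_natCast, Complex.norm_real, Real.norm_eq_abs, abs_of_nonneg ht]
  rw [h1]; ring

lemma poly_exp_bound {ε : ℝ} (hε : 0 < ε) (k : ℕ) {t : ℝ} (ht : 0 ≤ t) :
    t ^ k * Real.exp (-ε * t) ≤ (k.factorial : ℝ) * (2 / ε) ^ k := by
  have hf : (0:ℝ) < k.factorial := by exact_mod_cast k.factorial_pos
  have h1 : (ε/2 * t)^k / k.factorial ≤ Real.exp (ε/2 * t) :=
    le_trans (Finset.single_le_sum (f := fun i => (ε/2*t)^i / (i.factorial : ℝ))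
      (fun i _ => by positivity) (Finset.self_mem_range_succ k))
      (Real.sum_le_exp_of_nonneg (by positivity) (k+1))
  have h2 : (ε/2*t)^k ≤ (k.factorial : ℝ) * Real.exp (ε/2 * t) := by
    rw [div_le_iff₀ hf] at h1; linarith [h1]
  calc t^k * Real.exp (-ε * t)
      = (2/ε)^k * (ε/2*t)^k * Real.exp (-ε*t) := by
        rw [mul_pow, ← mul_assoc, ← mul_pow]
        rw [show (2/ε) * (ε/2) = 1 by field_simp]
        rw [one_pow, one_mul]
    _ ≤ (2/ε)^k * ((k.factorial : ℝ) * Real.exp (ε/2 * t)) * Real.exp (-ε*t) := by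
        have h2ε : (0:ℝ) ≤ (2/ε)^k := by positivity
        have := Real.exp_nonneg (-ε*t)
        nlinarith [mul_le_mul_of_nonneg_left h2 h2ε]
    _ = (k.factorial : ℝ) * (2/ε)^k * Real.exp (ε/2*t + -ε*t) := by
        rw [Real.exp_add]; ring
    _ ≤ (k.factorial : ℝ) * (2/ε)^k * 1 := by
        have : Real.exp (ε/2*t + -ε*t) ≤ 1 := by
          rw [Real.exp_le_one_iff]; nlinarith
        have h2ε : (0:ℝ) ≤ (k.factorial : ℝ) * (2/ε)^k := by positivity
        nlinarith
    _ = (k.factorial : ℝ) * (2/ε)^k := mul_one _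

lemma complex_decay (M : Matrix (Fin n) (Fin n) ℂ) (hn : 0 < n)
    (hM : ∀ μ ∈ spectrum ℂ M, μ.re < 0) :
    ∃ C c : ℝ, 0 < c ∧ ∀ t : ℝ, 0 ≤ t → ‖exp (t • M)‖ ≤ C * Real.exp (-c * t) := by
  have hne : Nonempty (Fin n) := ⟨⟨0, hn⟩⟩
  obtain ⟨μ₀, hμ₀S, hmax⟩ := (spectrum.isCompact M).exists_isMaxOn (spectrum.nonempty M)
    Complex.continuous_re.continuousOn
  set δ : ℝ := -μ₀.re with hδdef
  have hδ : 0 < δ := by have := hM μ₀ hμ₀S; simp only [hδdef]; linarith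
  set g : {t : ℝ // 0 ≤ t} → ((Fin n → ℂ) →L[ℂ] (Fin n → ℂ)) :=
    fun t => ContinuousLinearMap.mk (Matrix.mulVecLin (Real.exp (δ/2 * t.1) • exp (t.1 • M)))
    with hg
  have hgsmul : ∀ (r : ℝ) (B : Matrix (Fin n) (Fin n) ℂ) (x : Fin n → ℂ),
      (r • B) *ᵥ x = r • (B *ᵥ x) := by
    intro r B x
    rw [show r • B = ((r : ℂ)) • B by rw [← algebraMap_smul ℂ r B, Complex.coe_algebraMap],
      Matrix.smul_mulVec]
    rw [← algebraMap_smul ℂ r (B *ᵥ x), Complex.coe_algebraMap]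
  have hpt : ∀ x : Fin n → ℂ, ∃ C, ∀ t, ‖g t x‖ ≤ C := by
    intro x
    have hx : x ∈ ⨆ μ : ℂ, Module.End.maxGenEigenspace (Matrix.toLinAlgEquiv' M) μ := by
      rw [Module.End.iSup_maxGenEigenspace_eq_top]; trivial
    obtain ⟨d, hd, hdsum⟩ := (Submodule.mem_iSup_iff_exists_finsupp _ _).mp hx
    have hbd : ∀ μ : ℂ, ∃ B, ∀ t : ℝ, 0 ≤ t →
        Real.exp (δ/2 * t) * ‖exp (t • M) *ᵥ d μ‖ ≤ B := by
      intro μ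
      by_cases hv0 : d μ = 0
      · exact ⟨0, fun t ht => by simp [hv0]⟩
      obtain ⟨K, hK⟩ := exp_mulVec_genEig M (hd μ)
      have hμre : μ.re ≤ -δ := by
        obtain ⟨k, hk⟩ := (Module.End.mem_maxGenEigenspace _ _ _).mp (hd μ)
        have hgev : Module.End.HasGenEigenvalue (Matrix.toLinAlgEquiv' M) μ k := by
          rw [Module.End.hasGenEigenvalue_iff]
          refine Submodule.ne_bot_iff _ |>.mpr ⟨d μ, ?_, hv0⟩
          rw [Module.End.genEigenspace_nat]
          exact LinearMap.mem_ker.mpr hk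
        have hev := Module.End.hasEigenvalue_of_hasGenEigenvalue hgev
        have hspec : μ ∈ spectrum ℂ M := by
          rw [← AlgEquiv.spectrum_eq (Matrix.toLinAlgEquiv' (R := ℂ) (n := Fin n)) M]
          exact Module.End.hasEigenvalue_iff_mem_spectrum.mp hev
        have := hmax hspec
        simpa [hδdef] using this
      refine ⟨∑ k ∈ Finset.range K, (4/δ)^k * ‖((M - μ • 1) ^ k) *ᵥ d μ‖, fun t ht => ?_⟩
      have h1 := hK t ht
      calc Real.exp (δ/2 * t) * ‖exp (t • M) *ᵥ d μ‖
          ≤ Real.exp (δ/2 * t) * (Real.exp (t * μ.re) *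
            ∑ k ∈ Finset.range K, t ^ k * ‖((M - μ • 1) ^ k) *ᵥ d μ‖ / (k.factorial : ℝ)) := by
            have := Real.exp_nonneg (δ/2 * t)
            nlinarith [h1]
        _ = ∑ k ∈ Finset.range K, Real.exp (δ/2 * t + t * μ.re) *
              (t ^ k * ‖((M - μ • 1) ^ k) *ᵥ d μ‖ / (k.factorial : ℝ)) := by
            rw [← mul_assoc, ← Real.exp_add, Finset.mul_sum]
        _ ≤ ∑ k ∈ Finset.range K, (4/δ)^k * ‖((M - μ • 1) ^ k) *ᵥ d μ‖ := by
            refine Finset.sum_le_sum fun k _ => ?_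
            have hfk : (0:ℝ) < k.factorial := by exact_mod_cast k.factorial_pos
            have hexple : Real.exp (δ/2 * t + t * μ.re) ≤ Real.exp (-(δ/2) * t) :=
              Real.exp_le_exp.mpr (by nlinarith)
            have hpb := poly_exp_bound (by linarith : (0:ℝ) < δ/2) k ht
            have h42 : (2 / (δ/2)) = 4/δ := by field_simp; ring
            rw [h42] at hpb
            have hnn : (0:ℝ) ≤ ‖((M - μ • 1) ^ k) *ᵥ d μ‖ := norm_nonneg _
            have hexpnn := Real.exp_nonneg (δ/2 * t + t * μ.re)
            have htk : (0:ℝ) ≤ t ^ k := pow_nonneg ht k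
            calc Real.exp (δ/2 * t + t * μ.re) *
                  (t ^ k * ‖((M - μ • 1) ^ k) *ᵥ d μ‖ / (k.factorial : ℝ))
                ≤ Real.exp (-(δ/2) * t) *
                  (t ^ k * ‖((M - μ • 1) ^ k) *ᵥ d μ‖ / (k.factorial : ℝ)) := by
                  apply mul_le_mul_of_nonneg_right hexple; positivity
              _ = (t ^ k * Real.exp (-(δ/2) * t)) * ‖((M - μ • 1) ^ k) *ᵥ d μ‖ / (k.factorial : ℝ) := by
                  ring
              _ ≤ ((k.factorial : ℝ) * (4/δ)^k) * ‖((M - μ • 1) ^ k) *ᵥ d μ‖ / (k.factorial : ℝ) := by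
                  gcongr
              _ = (4/δ)^k * ‖((M - μ • 1) ^ k) *ᵥ d μ‖ := by
                  field_simp
    choose B hB using hbd
    refine ⟨∑ μ ∈ d.support, B μ, fun t => ?_⟩
    have hxsum : x = ∑ μ ∈ d.support, d μ := by
      rw [← hdsum, Finsupp.sum]
    have hmv : exp (t.1 • M) *ᵥ x = ∑ μ ∈ d.support, exp (t.1 • M) *ᵥ d μ := by
      rw [hxsum]
      simp only [← Matrix.mulVecLin_apply]
      exact map_sum _ _ _
    have hthis : g t x = Real.exp (δ/2 * t.1) • (exp (t.1 • M) *ᵥ x) := by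
      simp only [hg]
      exact hgsmul _ _ _
    rw [hthis, norm_smul, Real.norm_eq_abs, abs_of_pos (Real.exp_pos _), hmv]
    calc Real.exp (δ/2 * t.1) * ‖∑ μ ∈ d.support, exp (t.1 • M) *ᵥ d μ‖
        ≤ Real.exp (δ/2 * t.1) * ∑ μ ∈ d.support, ‖exp (t.1 • M) *ᵥ d μ‖ := by
          have := norm_sum_le d.support (fun μ => exp (t.1 • M) *ᵥ d μ)
          nlinarith [Real.exp_nonneg (δ/2 * t.1)]
      _ = ∑ μ ∈ d.support, Real.exp (δ/2 * t.1) * ‖exp (t.1 • M) *ᵥ d μ‖ := Finset.mul_sum _ _ _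
      _ ≤ ∑ μ ∈ d.support, B μ := Finset.sum_le_sum fun μ _ => hB μ t.1 t.2
  obtain ⟨C', hC'⟩ := banach_steinhaus hpt
  refine ⟨C', δ/2, by linarith, fun t ht => ?_⟩
  have h3 := hC' ⟨t, ht⟩
  have h2 : ‖g ⟨t, ht⟩‖ = Real.exp (δ/2 * t) * ‖exp (t • M)‖ := by
    simp only [hg]
    rw [← Matrix.linfty_opNorm_eq_opNorm, norm_smul, Real.norm_eq_abs,
      abs_of_pos (Real.exp_pos _)]
  rw [h2] at h3
  have hepos := Real.exp_pos (δ/2 * t)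
  have hle : ‖exp (t • M)‖ ≤ C' / Real.exp (δ/2 * t) := by
    rw [le_div_iff₀ hepos]; linarith [h3]
  calc ‖exp (t • M)‖ ≤ C' / Real.exp (δ/2 * t) := hle
    _ = C' * Real.exp (-(δ/2) * t) := by
        rw [show -(δ/2) * t = -(δ/2 * t) by ring, Real.exp_neg, div_eq_mul_inv]


lemma matrix_spectrum_transpose (B : Matrix (Fin n) (Fin n) ℂ) :
    spectrum ℂ Bᵀ = spectrum ℂ B := by
  ext μ
  rw [spectrum.mem_iff, spectrum.mem_iff, not_iff_not,
    Matrix.isUnit_iff_isUnit_det, Matrix.isUnit_iff_isUnit_det]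
  rw [show algebraMap ℂ (Matrix (Fin n) (Fin n) ℂ) μ - Bᵀ = (algebraMap ℂ _ μ - B)ᵀ by
    rw [Matrix.transpose_sub]
    congr 1
    rw [Algebra.algebraMap_eq_smul_one (A := Matrix (Fin n) (Fin n) ℂ),
      Matrix.transpose_smul, Matrix.transpose_one]]
  rw [Matrix.det_transpose]

lemma map_norm_eq (B : Matrix (Fin n) (Fin n) ℝ) :
    ‖B.map (algebraMap ℝ ℂ)‖ = ‖B‖ := by
  rw [Matrix.linfty_opNorm_def, Matrix.linfty_opNorm_def]
  congr 1
  refine Finset.sup_congr rfl fun i _ => ?_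
  refine Finset.sum_congr rfl fun j _ => ?_
  simp [Matrix.map_apply, Complex.coe_algebraMap]

lemma map_exp_comm (X : Matrix (Fin n) (Fin n) ℝ) :
    (exp X).map (algebraMap ℝ ℂ) = exp (X.map (algebraMap ℝ ℂ)) := by
  have hcont : Continuous ((algebraMap ℝ ℂ).mapMatrix :
      Matrix (Fin n) (Fin n) ℝ →+* Matrix (Fin n) (Fin n) ℂ) := by
    show Continuous fun X : Matrix (Fin n) (Fin n) ℝ => X.map (algebraMap ℝ ℂ)
    exact Continuous.matrix_map continuous_id Complex.continuous_ofReal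
  have h1 := map_exp ((algebraMap ℝ ℂ).mapMatrix) hcont X
  have h2 : exp (X.map (algebraMap ℝ ℂ)) = exp (X.map (algebraMap ℝ ℂ)) := by
    rfl
  calc (exp X).map (algebraMap ℝ ℂ) = exp (X.map (algebraMap ℝ ℂ)) := h1
    _ = _ := h2

lemma real_decay (A : Matrix (Fin n) (Fin n) ℝ) (hn : 0 < n)
    (hA : ∀ μ ∈ spectrum ℂ (A.map (algebraMap ℝ ℂ)), μ.re < 0) :
    ∃ C c : ℝ, 0 < c ∧ ∀ t : ℝ, 0 ≤ t → ‖exp (t • A)‖ ≤ C * Real.exp (-c * t) := by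
  obtain ⟨C, c, hc, hC⟩ := complex_decay (A.map (algebraMap ℝ ℂ)) hn hA
  refine ⟨C, c, hc, fun t ht => ?_⟩
  have hsm : (t • A).map (algebraMap ℝ ℂ) = t • A.map (algebraMap ℝ ℂ) := by
    ext i j
    simp [Matrix.map_apply]
  have key : ‖exp (t • A)‖ = ‖exp (t • A.map (algebraMap ℝ ℂ))‖ := by
    rw [← map_norm_eq (exp (t • A)), map_exp_comm, hsm]
  rw [key]
  exact hC t ht


/-- Left-multiplication CLM. -/
noncomputable def lmulCLM (X : Matrix (Fin n) (Fin n) ℝ) :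
    Matrix (Fin n) (Fin n) ℝ →L[ℝ] Matrix (Fin n) (Fin n) ℝ :=
  LinearMap.toContinuousLinearMap
    { toFun := fun B => X * B
      map_add' := fun B C => mul_add X B C
      map_smul' := fun a B => mul_smul_comm a X B }

noncomputable def rmulCLM (X : Matrix (Fin n) (Fin n) ℝ) :
    Matrix (Fin n) (Fin n) ℝ →L[ℝ] Matrix (Fin n) (Fin n) ℝ :=
  LinearMap.toContinuousLinearMap
    { toFun := fun B => B * X
      map_add' := fun B C => add_mul B C X
      map_smul' := fun a B => smul_mul_assoc a B X }

noncomputable def transposeCLM :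
    Matrix (Fin n) (Fin n) ℝ →L[ℝ] Matrix (Fin n) (Fin n) ℝ :=
  LinearMap.toContinuousLinearMap
    { toFun := fun B => Bᵀ
      map_add' := fun B C => Matrix.transpose_add B C
      map_smul' := fun a B => Matrix.transpose_smul a B }

noncomputable def quadCLM (x : Fin n → ℝ) :
    Matrix (Fin n) (Fin n) ℝ →L[ℝ] ℝ :=
  LinearMap.toContinuousLinearMap
    { toFun := fun B => dotProduct x (B *ᵥ x)
      map_add' := fun B C => by simp [Matrix.add_mulVec, dotProduct_add]
      map_smul' := fun a B => by simp [Matrix.smul_mulVec, dotProduct_smul] }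

/-- Lyapunov's theorem: for any Hurwitz matrix `A` (all complex eigenvalues have
negative real part) there exists a symmetric positive definite `P` with
`P*A + Aᵀ*P = -I`. -/
theorem hurwitz_exists_lyapunov_solution {n : ℕ} (A : Matrix (Fin n) (Fin n) ℝ)
    (hA : ∀ μ ∈ spectrum ℂ (A.map (algebraMap ℝ ℂ)), μ.re < 0) :
    ∃ P : Matrix (Fin n) (Fin n) ℝ,
      P.IsSymm ∧ P.PosDef ∧ P * A + A.transpose * P = -1 := by
  rcases Nat.eq_zero_or_pos n with hn | hn
  · subst hn
    refine ⟨0, ?_, ⟨?_, ?_⟩, ?_⟩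
    · exact Subsingleton.elim _ _
    · exact Subsingleton.elim _ _
    · intro x hx; exact absurd (Subsingleton.elim x 0) hx
    · exact Subsingleton.elim _ _
  obtain ⟨C, c, hc, hC⟩ := real_decay A hn hA
  have hAT : ∀ μ ∈ spectrum ℂ (Aᵀ.map (algebraMap ℝ ℂ)), μ.re < 0 := by
    intro μ hμ
    apply hA
    rwa [Matrix.transpose_map, matrix_spectrum_transpose] at hμ
  obtain ⟨C', c', hc', hC'⟩ := real_decay Aᵀ hn hAT
  set g : ℝ → Matrix (Fin n) (Fin n) ℝ := fun t => exp (t • Aᵀ) * exp (t • A) with hgdef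
  have hgcont : Continuous g := by
    apply Continuous.mul
    · exact exp_continuous.comp (continuous_id.smul continuous_const)
    · exact exp_continuous.comp (continuous_id.smul continuous_const)
  have hgsymm : ∀ t : ℝ, (g t)ᵀ = g t := by
    intro t
    have e1 : (exp (t • A))ᵀ = exp (t • Aᵀ) := by
      rw [← Matrix.exp_transpose, Matrix.transpose_smul]
    have e2 : (exp (t • Aᵀ))ᵀ = exp (t • A) := by
      rw [← Matrix.exp_transpose, Matrix.transpose_smul, Matrix.transpose_transpose]
    rw [hgdef]
    dsimp only
    rw [Matrix.transpose_mul, e1, e2]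
  have hgb : ∀ t : ℝ, 0 ≤ t → ‖g t‖ ≤ (C' * C) * Real.exp (-(c' + c) * t) := by
    intro t ht
    calc ‖g t‖ ≤ ‖exp (t • Aᵀ)‖ * ‖exp (t • A)‖ := norm_mul_le _ _
      _ ≤ (C' * Real.exp (-c' * t)) * (C * Real.exp (-c * t)) :=
          mul_le_mul (hC' t ht) (hC t ht) (norm_nonneg _)
            ((norm_nonneg _).trans (hC' t ht))
      _ = (C' * C) * Real.exp (-(c' + c) * t) := by
          rw [show -(c' + c) * t = -c' * t + -c * t by ring, Real.exp_add]; ring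
  have hgint : IntegrableOn g (Ioi (0:ℝ)) := by
    refine Integrable.mono' ((exp_neg_integrableOn_Ioi 0 (by linarith : (0:ℝ) < c' + c)).const_mul
      (C' * C)) hgcont.aestronglyMeasurable ?_
    filter_upwards [ae_restrict_mem measurableSet_Ioi] with t ht
    exact hgb t (le_of_lt ht)
  set P : Matrix (Fin n) (Fin n) ℝ := ∫ t in Ioi (0:ℝ), g t with hPdef
  have hPsymm : P.IsSymm := by
    show Pᵀ = P
    have h1 : Pᵀ = ∫ t in Ioi (0:ℝ), (g t)ᵀ := by
      rw [hPdef]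
      exact (transposeCLM.integral_comp_comm hgint).symm
    rw [h1]
    refine setIntegral_congr_fun measurableSet_Ioi fun t _ => hgsymm t
  -- invertibility of exp, hence positivity of the integrand
  have hyne : ∀ (t : ℝ) (x : Fin n → ℝ), x ≠ 0 → exp (t • A) *ᵥ x ≠ 0 := by
    intro t x hx hy0
    have hinv : exp (-(t • A)) * exp (t • A) = 1 := by
      rw [← Matrix.exp_add_of_commute _ _ (Commute.refl (t • A)).neg_left, neg_add_cancel, exp_zero]
    have hxz : x = 0 := by
      have h2 := congrArg (fun B => B *ᵥ x) hinv
      simpa [← Matrix.mulVec_mulVec, hy0, Matrix.mulVec_zero, Matrix.one_mulVec] using h2.symm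
    exact hx hxz
  have hquadpos : ∀ (t : ℝ) (x : Fin n → ℝ), x ≠ 0 → 0 < dotProduct x (g t *ᵥ x) := by
    intro t x hx
    have hq : dotProduct x (g t *ᵥ x) =
        dotProduct (exp (t • A) *ᵥ x) (exp (t • A) *ᵥ x) := by
      rw [hgdef]
      dsimp only
      rw [← Matrix.mulVec_mulVec, Matrix.dotProduct_mulVec,
        show exp (t • Aᵀ) = (exp (t • A))ᵀ by
          rw [← Matrix.exp_transpose, Matrix.transpose_smul],
        Matrix.vecMul_transpose]
    rw [hq]
    have hne0 : dotProduct (exp (t • A) *ᵥ x) (exp (t • A) *ᵥ x) ≠ 0 :=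
      fun h0 => hyne t x hx (dotProduct_self_eq_zero.mp h0)
    have hnn : (0:ℝ) ≤ dotProduct (exp (t • A) *ᵥ x) (exp (t • A) *ᵥ x) :=
      Finset.sum_nonneg fun i _ => mul_self_nonneg _
    exact lt_of_le_of_ne hnn (Ne.symm hne0)
  have hPposdef : P.PosDef := by
    refine Matrix.PosDef.of_dotProduct_mulVec_pos ?_ ?_
    · show Pᴴ = P
      have : Pᴴ = Pᵀ := by
        ext i j
        simp [Matrix.conjTranspose_apply, Matrix.transpose_apply]
      rw [this]; exact hPsymm
    · intro x hx
      have hstar : star x = x := by simp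
      rw [hstar]
      have hquad : dotProduct x (P *ᵥ x) = ∫ t in Ioi (0:ℝ), dotProduct x (g t *ᵥ x) := by
        rw [hPdef]
        exact ((quadCLM x).integral_comp_comm hgint).symm
      show 0 < dotProduct x (P *ᵥ x)
      rw [hquad]
      have hqint : IntegrableOn (fun t => dotProduct x (g t *ᵥ x)) (Ioi (0:ℝ)) :=
        (quadCLM x).integrable_comp hgint
      rw [show (fun t => dotProduct x (g t *ᵥ x)) = fun t => (quadCLM x) (g t) from rfl] at hqint ⊢
      rw [setIntegral_pos_iff_support_of_nonneg_ae ?nonneg hqint]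
      case nonneg =>
        filter_upwards [ae_restrict_mem measurableSet_Ioi] with t _
        exact le_of_lt (hquadpos t x hx)
      have hsupp : Ioi (0:ℝ) ⊆ Function.support fun t => (quadCLM x) (g t) := by
        intro t _
        exact ne_of_gt (hquadpos t x hx)
      have : Function.support (fun t => (quadCLM x) (g t)) ∩ Ioi 0 = Ioi 0 :=
        Set.inter_eq_right.mpr hsupp
      rw [this, Real.volume_Ioi]
      exact ENNReal.zero_lt_top
  refine ⟨P, hPsymm, hPposdef, ?_⟩
  -- the Lyapunov equation via FTC and limits
  have hderiv : ∀ t : ℝ, HasDerivAt g (Aᵀ * g t + g t * A) t := by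
    intro t
    have h1 : HasDerivAt (fun s : ℝ => exp (s • Aᵀ)) (Aᵀ * exp (t • Aᵀ)) t :=
      hasDerivAt_exp_smul_const' Aᵀ t
    have h2 : HasDerivAt (fun s : ℝ => exp (s • A)) (exp (t • A) * A) t :=
      hasDerivAt_exp_smul_const A t
    have h3 := h1.mul h2
    refine h3.congr_deriv ?_
    rw [hgdef]
    dsimp only
    noncomm_ring
  have hdcont : Continuous fun t => Aᵀ * g t + g t * A :=
    (continuous_const.mul hgcont).add (hgcont.mul continuous_const)
  have hftc : ∀ T : ℝ, (∫ t in (0:ℝ)..T, (Aᵀ * g t + g t * A)) = g T - g 0 := fun T =>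
    intervalIntegral.integral_eq_sub_of_hasDerivAt (fun t _ => hderiv t)
      (hdcont.intervalIntegrable _ _)
  have hg0 : g 0 = 1 := by
    rw [hgdef]
    dsimp only
    rw [zero_smul, zero_smul, exp_zero, one_mul]
  have hsplit : ∀ T : ℝ, (∫ t in (0:ℝ)..T, (Aᵀ * g t + g t * A)) =
      Aᵀ * (∫ t in (0:ℝ)..T, g t) + (∫ t in (0:ℝ)..T, g t) * A := by
    intro T
    have hgi : IntervalIntegrable g volume 0 T := hgcont.intervalIntegrable _ _
    rw [intervalIntegral.integral_add (f := fun t => Aᵀ * g t) (g := fun t => g t * A)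
      (((continuous_const.mul hgcont)).intervalIntegrable _ _)
      ((hgcont.mul continuous_const).intervalIntegrable _ _)]
    congr 1
    · exact (lmulCLM Aᵀ).intervalIntegral_comp_comm hgi
    · exact (rmulCLM A).intervalIntegral_comp_comm hgi
  have hQtend : Tendsto (fun T => ∫ t in (0:ℝ)..T, g t) atTop (𝓝 P) :=
    intervalIntegral_tendsto_integral_Ioi 0 hgint tendsto_id
  have hgtend : Tendsto g atTop (𝓝 0) := by
    refine squeeze_zero_norm' (Filter.eventually_atTop.mpr ⟨0, fun T hT => hgb T hT⟩) ?_
    have h1 : Tendsto (fun T : ℝ => -(c' + c) * T) atTop atBot := by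
      simp only [neg_mul]
      exact tendsto_neg_atTop_atBot.comp
        (tendsto_id.const_mul_atTop (by linarith : (0:ℝ) < c' + c))
    have h2 : Tendsto (fun T : ℝ => Real.exp (-(c' + c) * T)) atTop (𝓝 0) :=
      Real.tendsto_exp_atBot.comp h1
    simpa using h2.const_mul (C' * C)
  have hlhs : Tendsto (fun T => Aᵀ * (∫ t in (0:ℝ)..T, g t) + (∫ t in (0:ℝ)..T, g t) * A)
      atTop (𝓝 (Aᵀ * P + P * A)) := by
    have hcontmap : Continuous fun X : Matrix (Fin n) (Fin n) ℝ => Aᵀ * X + X * A :=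
      (continuous_const.mul continuous_id).add (continuous_id.mul continuous_const)
    exact (hcontmap.tendsto P).comp hQtend
  have hrhs : Tendsto (fun T => g T - g 0) atTop (𝓝 (-1)) := by
    rw [hg0]
    have := hgtend.sub_const (1 : Matrix (Fin n) (Fin n) ℝ)
    simpa using this
  have heq : Aᵀ * P + P * A = -1 := by
    apply tendsto_nhds_unique _ hrhs
    have : (fun T => g T - g 0) = fun T =>
        Aᵀ * (∫ t in (0:ℝ)..T, g t) + (∫ t in (0:ℝ)..T, g t) * A := by
      funext T
      rw [← hftc T, hsplit T]
    rw [this]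
    exact hlhs
  rw [add_comm] at heq
  rw [heq]

end Lyap
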